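/- For every nonempty closed convex cone K ⊆ ℝ^d and every δ ∈ (0,1), there exists a finite nonempty set Ȳ contained in the relative interior of K such that cone Ȳ ⊆ K and d_H(cone Ȳ ∩ 𝔹, K ∩ 𝔹) ≤ δ, where cone Ȳ is the conic hull of Ȳ. -/

import Mathlib

open Metric Set

noncomputable section

/-- `ℝ^d` as a Euclidean space. -/
abbrev Em (d : ℕ) := EuclideanSpace ℝ (Fin d)

/-- The conic hull: all finite nonnegative combinations of elements of `M`. -/
def coneHull {V : Type*} [AddCommMonoid V] [Module ℝ V] (M : Set V) : Set V :=
  {x | ∃ (k : ℕ) (c : Fin k → ℝ) (v : Fin k → V),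
    (∀ i, 0 ≤ c i) ∧ (∀ i, v i ∈ M) ∧ x = ∑ i, c i • v i}

lemma mem_coneHull_self' {V : Type*} [AddCommMonoid V] [Module ℝ V] {M : Set V} {y : V}
    (h : y ∈ M) : y ∈ coneHull M :=
  ⟨1, fun _ => 1, fun _ => y, fun _ => zero_le_one, fun _ => h, by simp⟩

lemma mem_intrinsicInterior_iff_dist' {d : ℕ} {K : Set (Em d)} {x : Em d} :
    x ∈ intrinsicInterior ℝ K ↔
      x ∈ K ∧ ∃ ε > 0, ∀ u ∈ (affineSpan ℝ K : Set (Em d)), dist u x < ε → u ∈ K := by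
  constructor
  · intro h
    obtain ⟨y, hy, rfl⟩ := mem_intrinsicInterior.1 h
    have hyK : (y : Em d) ∈ K :=
      interior_subset (s := (Subtype.val ⁻¹' K : Set (affineSpan ℝ K))) hy
    rw [mem_interior_iff_mem_nhds, Metric.mem_nhds_iff] at hy
    obtain ⟨ε, hε, hball⟩ := hy
    refine ⟨hyK, ε, hε, fun u hu hdist => ?_⟩
    have : (⟨u, hu⟩ : affineSpan ℝ K) ∈ Metric.ball y ε := by
      rw [Metric.mem_ball, Subtype.dist_eq]; exact hdist
    exact hball this
  · rintro ⟨hxK, ε, hε, h⟩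
    have hx' : x ∈ affineSpan ℝ K := subset_affineSpan ℝ K hxK
    refine mem_intrinsicInterior.2 ⟨⟨x, hx'⟩, ?_, rfl⟩
    rw [mem_interior_iff_mem_nhds, Metric.mem_nhds_iff]
    refine ⟨ε, hε, fun u hu => ?_⟩
    rw [Metric.mem_ball, Subtype.dist_eq] at hu
    exact h u u.2 hu

lemma combo_mem_intrinsicInterior' {d : ℕ} {K : Set (Em d)} (hKconv : Convex ℝ K)
    {z x : Em d} (hz : z ∈ intrinsicInterior ℝ K) (hx : x ∈ K)
    {t : ℝ} (ht0 : 0 < t) (ht1 : t ≤ 1) :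
    t • z + (1 - t) • x ∈ intrinsicInterior ℝ K := by
  obtain ⟨hzK, ε, hε, hball⟩ := mem_intrinsicInterior_iff_dist'.1 hz
  have htne : t ≠ 0 := ht0.ne'
  have hwK : t • z + (1 - t) • x ∈ K := hKconv hzK hx ht0.le (by linarith) (by ring)
  refine mem_intrinsicInterior_iff_dist'.2 ⟨hwK, t * ε, by positivity, fun u hu hdist => ?_⟩
  set w := t • z + (1 - t) • x with hw
  set u' := t⁻¹ • (u - w) + z with hu'def
  have hu'span : u' ∈ affineSpan ℝ K := by
    have hxspan : x ∈ affineSpan ℝ K := subset_affineSpan ℝ K hx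
    have : u' = t⁻¹ • (u -ᵥ x) +ᵥ x := by
      simp only [hu'def, hw, vsub_eq_sub, vadd_eq_add]
      match_scalars <;> (field_simp; try ring)
    rw [this]
    exact AffineSubspace.smul_vsub_vadd_mem _ t⁻¹ hu hxspan hxspan
  have hu'K : u' ∈ K := by
    apply hball u' hu'span
    have : dist u' z = t⁻¹ * ‖u - w‖ := by
      rw [dist_eq_norm]
      have : u' - z = t⁻¹ • (u - w) := by rw [hu'def]; abel
      rw [this, norm_smul, Real.norm_eq_abs, abs_of_pos (by positivity)]
    rw [this]
    rw [dist_eq_norm] at hdist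
    calc t⁻¹ * ‖u - w‖ < t⁻¹ * (t * ε) := by
          apply mul_lt_mul_of_pos_left hdist (by positivity)
      _ = ε := by field_simp
  have : u = t • u' + (1 - t) • x := by
    simp only [hu'def, hw]
    match_scalars <;> (field_simp; try ring)
  rw [this]
  exact hKconv hu'K hx ht0.le (by linarith) (by ring)

/-- Every nonempty closed convex cone `K ⊆ ℝ^d` admits, for each `δ ∈ (0,1)`, a finite
nonempty set `Ȳ` of relative interior points of `K` with `cone Ȳ ⊆ K` and
`d_H(cone Ȳ ∩ 𝔹, K ∩ 𝔹) ≤ δ`. -/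
theorem exists_finite_inner_conic_approximation
    {d : ℕ} (K : Set (Em d)) (hKne : K.Nonempty) (hKcl : IsClosed K)
    (hKconv : Convex ℝ K) (hKcone : ∀ x ∈ K, ∀ r : ℝ, 0 ≤ r → r • x ∈ K)
    (δ : ℝ) (hδ : δ ∈ Set.Ioo (0:ℝ) 1) :
    ∃ Y : Set (Em d), Y.Finite ∧ Y.Nonempty ∧ Y ⊆ intrinsicInterior ℝ K ∧
      coneHull Y ⊆ K ∧
      hausdorffDist (coneHull Y ∩ closedBall 0 1) (K ∩ closedBall 0 1) ≤ δ := by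
  obtain ⟨hδ0, hδ1⟩ := hδ
  set ε := δ / 3 with hεdef
  have hε0 : 0 < ε := by positivity
  have hε1 : ε ≤ 1 := by rw [hεdef]; linarith
  -- 0 ∈ K
  have h0K : (0 : Em d) ∈ K := by
    obtain ⟨p, hp⟩ := hKne
    simpa using hKcone p hp 0 le_rfl
  -- a relative interior point of norm ≤ 1
  obtain ⟨z0, hz0⟩ := hKne.intrinsicInterior hKconv
  set t0 : ℝ := (‖z0‖ + 1)⁻¹ with ht0def
  have ht00 : 0 < t0 := by positivity
  have ht01 : t0 ≤ 1 := by
    rw [ht0def]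
    have h1 : (1:ℝ) ≤ ‖z0‖ + 1 := by have := norm_nonneg z0; linarith
    exact inv_le_one_of_one_le₀ h1
  set z : Em d := t0 • z0 with hzdef
  have hzint : z ∈ intrinsicInterior ℝ K := by
    have := combo_mem_intrinsicInterior' hKconv hz0 h0K ht00 ht01
    simpa [hzdef] using this
  have hznorm : ‖z‖ ≤ 1 := by
    rw [hzdef, norm_smul, Real.norm_eq_abs, abs_of_pos ht00]
    calc t0 * ‖z0‖ ≤ t0 * (‖z0‖ + 1) := by
          apply mul_le_mul_of_nonneg_left (by linarith) ht00.le
      _ = 1 := by rw [ht0def]; field_simp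
  -- finite ε-net of K ∩ 𝔹
  have hcomp : IsCompact (K ∩ closedBall 0 1) :=
    (isCompact_closedBall (0 : Em d) 1).of_isClosed_subset
      (hKcl.inter isClosed_closedBall) inter_subset_right
  obtain ⟨F, hFsub, hFcover⟩ := hcomp.elim_nhds_subcover (fun x => Metric.ball x ε)
    (fun x _ => ball_mem_nhds x hε0)
  have h0mem : (0 : Em d) ∈ K ∩ closedBall 0 1 := ⟨h0K, mem_closedBall_self zero_le_one⟩
  obtain ⟨f0, hf0F, _⟩ := mem_iUnion₂.1 (hFcover h0mem)
  -- the set Y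
  set Y : Set (Em d) := (fun f => ε • z + (1 - ε) • f) '' F with hYdef
  have hYint : Y ⊆ intrinsicInterior ℝ K := by
    rintro _ ⟨f, hf, rfl⟩
    exact combo_mem_intrinsicInterior' hKconv hzint (hFsub f hf).1 hε0 hε1
  have hYK : Y ⊆ K := fun y hy => intrinsicInterior_subset (hYint hy)
  -- coneHull Y ⊆ K
  have hadd : ∀ a b : Em d, a ∈ K → b ∈ K → a + b ∈ K := by
    intro a b ha hb
    have hmid : (1 / 2 : ℝ) • a + (1 / 2 : ℝ) • b ∈ K :=
      hKconv ha hb (by norm_num) (by norm_num) (by norm_num)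
    have h2 := hKcone _ hmid 2 (by norm_num)
    have : (2 : ℝ) • ((1 / 2 : ℝ) • a + (1 / 2 : ℝ) • b) = a + b := by module
    rwa [this] at h2
  have hcone : coneHull Y ⊆ K := by
    rintro x ⟨k, c, v, hc, hv, rfl⟩
    exact Finset.sum_induction _ (· ∈ K) hadd h0K
      (fun i _ => hKcone _ (hYK (hv i)) _ (hc i))
  refine ⟨Y, (F.finite_toSet.image _), ⟨_, mem_image_of_mem _ hf0F⟩, hYint, hcone, ?_⟩
  refine hausdorffDist_le_of_mem_dist hδ0.le ?_ ?_
  · intro x hx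
    exact ⟨x, ⟨hcone hx.1, hx.2⟩, by simp [hδ0.le]⟩
  · rintro x ⟨hxK, hxB⟩
    obtain ⟨f, hfF, hxf⟩ := mem_iUnion₂.1 (hFcover ⟨hxK, hxB⟩)
    rw [Metric.mem_ball] at hxf
    set y : Em d := ε • z + (1 - ε) • f with hy
    have hfB : ‖f‖ ≤ 1 := by
      have := (hFsub f hfF).2
      rwa [mem_closedBall, dist_zero_right] at this
    refine ⟨y, ⟨mem_coneHull_self' (mem_image_of_mem _ hfF), ?_⟩, ?_⟩
    · rw [mem_closedBall, dist_zero_right, hy]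
      have hn1 : ‖ε • z‖ = ε * ‖z‖ := by
        rw [norm_smul, Real.norm_eq_abs, abs_of_pos hε0]
      have hn2 : ‖(1 - ε) • f‖ = (1 - ε) * ‖f‖ := by
        rw [norm_smul, Real.norm_eq_abs, abs_of_nonneg (by linarith : (0:ℝ) ≤ 1 - ε)]
      calc ‖ε • z + (1 - ε) • f‖ ≤ ‖ε • z‖ + ‖(1 - ε) • f‖ := norm_add_le _ _
        _ = ε * ‖z‖ + (1 - ε) * ‖f‖ := by rw [hn1, hn2]
        _ ≤ ε * 1 + (1 - ε) * 1 := by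
            apply add_le_add
            · exact mul_le_mul_of_nonneg_left hznorm hε0.le
            · exact mul_le_mul_of_nonneg_left hfB (by linarith)
        _ = 1 := by ring
    · have hfy : dist f y = ε * ‖f - z‖ := by
        rw [dist_eq_norm]
        have : f - y = ε • (f - z) := by rw [hy]; module
        rw [this, norm_smul, Real.norm_eq_abs, abs_of_pos hε0]
      have hfz : ‖f - z‖ ≤ 2 := by
        calc ‖f - z‖ ≤ ‖f‖ + ‖z‖ := norm_sub_le _ _
          _ ≤ 2 := by linarith
      have hfy2 : dist f y ≤ ε * 2 := by
        rw [hfy]; exact mul_le_mul_of_nonneg_left hfz hε0.le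
      calc dist x y ≤ dist x f + dist f y := dist_triangle x f y
        _ ≤ ε + ε * 2 := add_le_add hxf.le hfy2
        _ = δ := by rw [hεdef]; ring
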